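/- Let K↔_4 be the complete digraph on 4 vertices. Then λ_2^c(K↔_4) = 3, and λ_k^c(K↔_4) = 2 for k ∈ {3, 4}. -/

import Mathlib

/-- A directed cycle in a digraph `D`, represented by its (nonempty, duplicate-free)
list of vertices in cyclic order; consecutive vertices (cyclically) are joined by arcs. -/
def IsDiCycle {V : Type*} (D : Digraph V) (l : List V) : Prop :=
  l.Nodup ∧ 2 ≤ l.length ∧ ∀ p ∈ l.zip (l.rotate 1), D.Adj p.1 p.2

/-- The set of arcs traversed by a cycle given by the vertex list `l`. -/
def cycArcs {V : Type*} (l : List V) : Set (V × V) :=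
  {p | p ∈ l.zip (l.rotate 1)}

/-- An `S`-cycle: a directed cycle whose vertex set contains `S`. -/
def IsSCycle {V : Type*} (D : Digraph V) (S : Set V) (l : List V) : Prop :=
  IsDiCycle D l ∧ ∀ s ∈ S, s ∈ l

/-- `D` contains `m` pairwise arc-disjoint `S`-cycles. -/
def ArcDisjointSCycles {V : Type*} (D : Digraph V) (S : Set V) (m : ℕ) : Prop :=
  ∃ f : Fin m → List V, (∀ i, IsSCycle D S (f i)) ∧
    ∀ i j, i ≠ j → Disjoint (cycArcs (f i)) (cycArcs (f j))

/-- `λ_S^c(D)`: the maximum number of pairwise arc-disjoint `S`-cycles in `D`. -/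
noncomputable def lambdaS {V : Type*} (D : Digraph V) (S : Set V) : ℕ :=
  sSup {m | ArcDisjointSCycles D S m}

/-- `λ_k^c(D)`: the directed cycle `k`-arc-connectivity of `D`, the minimum of
`λ_S^c(D)` over all vertex subsets `S` of size `k`. -/
noncomputable def lambdaK {V : Type*} [Fintype V] (D : Digraph V) (k : ℕ) : ℕ :=
  sInf {m | ∃ S : Finset V, S.card = k ∧ lambdaS D ↑S = m}

/-- The complete digraph on `n` vertices: all arcs between distinct vertices. -/
def completeDigraph (n : ℕ) : Digraph (Fin n) :=
  ⟨fun u v => u ≠ v⟩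

/-! ### Auxiliary machinery -/

/-- The list of arcs of a cycle list. -/
def arcsL {V : Type*} (l : List V) : List (V × V) := l.zip (l.rotate 1)

lemma mem_cycArcs {V : Type*} {l : List V} {p : V × V} :
    p ∈ cycArcs l ↔ p ∈ arcsL l := Iff.rfl

/-- Boolean arc-disjointness checker. -/
def disjB (l1 l2 : List (Fin 4)) : Bool := (arcsL l1).all fun p => !decide (p ∈ arcsL l2)

lemma disjB_iff {l1 l2 : List (Fin 4)} :
    disjB l1 l2 = true ↔ Disjoint (cycArcs l1) (cycArcs l2) := by
  rw [Set.disjoint_left]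
  simp only [disjB, List.all_eq_true, Bool.not_eq_true', decide_eq_false_iff_not, mem_cycArcs]

/-- Boolean `S`-cycle checker. -/
def chkS (S : Finset (Fin 4)) (l : List (Fin 4)) : Bool :=
  decide l.Nodup && decide (2 ≤ l.length) && decide (∀ p ∈ arcsL l, p.1 ≠ p.2)
    && decide (∀ s ∈ S, s ∈ l)

lemma isSCycle_of_chkS {S : Finset (Fin 4)} {l : List (Fin 4)} (h : chkS S l = true) :
    IsSCycle (completeDigraph 4) (↑S) l := by
  simp only [chkS, Bool.and_eq_true, decide_eq_true_eq] at h
  exact ⟨⟨h.1.1.1, h.1.1.2, h.1.2⟩, fun s hs => h.2 s hs⟩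

/-- All duplicate-free lists over `Fin 4` of length 3 or 4 that contain `0,1,2`. -/
def candL : List (List (Fin 4)) := [[0,1,2], [0,2,1], [1,0,2], [1,2,0], [2,0,1], [2,1,0],
  [0,1,2,3], [0,1,3,2], [0,2,1,3], [0,2,3,1], [0,3,1,2], [0,3,2,1], [1,0,2,3], [1,0,3,2],
  [1,2,0,3], [1,2,3,0], [1,3,0,2], [1,3,2,0], [2,0,1,3], [2,0,3,1], [2,1,0,3], [2,1,3,0],
  [2,3,0,1], [2,3,1,0], [3,0,1,2], [3,0,2,1], [3,1,0,2], [3,1,2,0], [3,2,0,1], [3,2,1,0]]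

set_option synthInstance.maxSize 1000 in
theorem noThreeB : (candL.all fun l1 => candL.all fun l2 => candL.all fun l3 =>
    !(disjB l1 l2 && disjB l1 l3 && disjB l2 l3)) = true := by decide

set_option synthInstance.maxSize 1000 in
lemma mem_candL_three : ∀ a b c : Fin 4, [a,b,c].Nodup → (0 : Fin 4) ∈ [a,b,c] →
    (1 : Fin 4) ∈ [a,b,c] → (2 : Fin 4) ∈ [a,b,c] → [a,b,c] ∈ candL := by decide

set_option synthInstance.maxSize 1000 in
lemma mem_candL_four : ∀ a b c d : Fin 4, [a,b,c,d].Nodup → [a,b,c,d] ∈ candL := by decide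

lemma mem_candL {l : List (Fin 4)} (hnd : l.Nodup) (h0 : (0 : Fin 4) ∈ l)
    (h1 : (1 : Fin 4) ∈ l) (h2 : (2 : Fin 4) ∈ l) : l ∈ candL := by
  have hsub : ([0,1,2] : List (Fin 4)) ⊆ l := by
    intro a ha
    simp only [List.mem_cons, List.not_mem_nil, or_false] at ha
    rcases ha with rfl | rfl | rfl
    · exact h0
    · exact h1
    · exact h2
  have hsp : List.Subperm ([0,1,2] : List (Fin 4)) l := List.subperm_of_subset (by decide) hsub
  have h3 : 3 ≤ l.length := by simpa using hsp.length_le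
  have h4 : l.length ≤ 4 := by simpa using hnd.length_le_card
  rcases l with _ | ⟨a, _ | ⟨b, _ | ⟨c, _ | ⟨d, _ | ⟨e, t⟩⟩⟩⟩⟩
  · simp at h3
  · simp at h3
  · simp at h3
  · exact mem_candL_three a b c hnd h0 h1 h2
  · exact mem_candL_four a b c d hnd
  · simp at h4; omega

/-- The key impossibility: no three pairwise arc-disjoint `S`-cycles if `0,1,2 ∈ S`. -/
lemma noThreeSCycles {S : Set (Fin 4)} (h0 : (0 : Fin 4) ∈ S) (h1 : (1 : Fin 4) ∈ S)
    (h2 : (2 : Fin 4) ∈ S) : ¬ ArcDisjointSCycles (completeDigraph 4) S 3 := by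
  rintro ⟨f, hf, hd⟩
  have hm : ∀ i, f i ∈ candL := fun i =>
    mem_candL (hf i).1.1 ((hf i).2 0 h0) ((hf i).2 1 h1) ((hf i).2 2 h2)
  have key := noThreeB
  simp only [List.all_eq_true] at key
  have := key _ (hm 0) _ (hm 1) _ (hm 2)
  rw [Bool.not_eq_true', Bool.and_eq_false_iff, Bool.and_eq_false_iff] at this
  have d01 := disjB_iff.mpr (hd 0 1 (by decide))
  have d02 := disjB_iff.mpr (hd 0 2 (by decide))
  have d12 := disjB_iff.mpr (hd 1 2 (by decide))
  rcases this with (h | h) | h <;> simp_all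

/-- Generic builder for two arc-disjoint `S`-cycles. -/
lemma build2 (S : Finset (Fin 4)) (l1 l2 : List (Fin 4)) (h1 : chkS S l1 = true)
    (h2 : chkS S l2 = true) (d12 : disjB l1 l2 = true) :
    ArcDisjointSCycles (completeDigraph 4) (↑S) 2 := by
  refine ⟨![l1, l2], fun i => ?_, fun i j hij => ?_⟩
  · fin_cases i
    · exact isSCycle_of_chkS h1
    · exact isSCycle_of_chkS h2
  · fin_cases i <;> fin_cases j <;> simp_all
    · exact disjB_iff.mp d12
    · exact (disjB_iff.mp d12).symm

/-- Generic builder for three arc-disjoint `S`-cycles. -/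
lemma build3 (S : Finset (Fin 4)) (l1 l2 l3 : List (Fin 4)) (h1 : chkS S l1 = true)
    (h2 : chkS S l2 = true) (h3 : chkS S l3 = true) (d12 : disjB l1 l2 = true)
    (d13 : disjB l1 l3 = true) (d23 : disjB l2 l3 = true) :
    ArcDisjointSCycles (completeDigraph 4) (↑S) 3 := by
  refine ⟨![l1, l2, l3], fun i => ?_, fun i j hij => ?_⟩
  · fin_cases i
    · exact isSCycle_of_chkS h1
    · exact isSCycle_of_chkS h2
    · exact isSCycle_of_chkS h3
  · fin_cases i <;> fin_cases j <;> simp_all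
    · exact disjB_iff.mp d12
    · exact disjB_iff.mp d13
    · exact (disjB_iff.mp d12).symm
    · exact disjB_iff.mp d23
    · exact (disjB_iff.mp d13).symm
    · exact (disjB_iff.mp d23).symm

set_option synthInstance.maxSize 1000 in
lemma chkS_ham : ∀ S : Finset (Fin 4), chkS S [0,1,2,3] = true ∧ chkS S [0,3,2,1] = true ∧
    disjB [0,1,2,3] [0,3,2,1] = true := by decide

/-- Every vertex set admits two arc-disjoint `S`-cycles (two Hamiltonian cycles). -/
lemma twoCycles (S : Finset (Fin 4)) : ArcDisjointSCycles (completeDigraph 4) (↑S) 2 :=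
  build2 S [0,1,2,3] [0,3,2,1] (chkS_ham S).1 (chkS_ham S).2.1 (chkS_ham S).2.2

/-- Downward closure. -/
lemma arcDisjoint_mono {V : Type*} {D : Digraph V} {S : Set V} {m k : ℕ}
    (h : ArcDisjointSCycles D S m) (hk : k ≤ m) : ArcDisjointSCycles D S k := by
  obtain ⟨f, h1, h2⟩ := h
  exact ⟨fun i => f (Fin.castLE hk i), fun i => h1 _,
    fun i j hij => h2 _ _ fun hc => hij (Fin.castLE_injective hk hc)⟩

/-- Any family of arc-disjoint `S`-cycles with `S` nonempty has at most 3 members. -/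
lemma bdd_three {S : Set (Fin 4)} {s : Fin 4} (hs : s ∈ S) {m : ℕ}
    (h : ArcDisjointSCycles (completeDigraph 4) S m) : m ≤ 3 := by
  obtain ⟨f, hf, hd⟩ := h
  -- for each cycle, find the arc leaving `s`
  have key : ∀ i : Fin m, ∃ t : Fin 4, t ≠ s ∧ (s, t) ∈ cycArcs (f i) := by
    intro i
    obtain ⟨⟨hnd, hlen, _⟩, hmem⟩ := hf i
    set l := f i with hl
    have hsl : s ∈ l := hmem s hs
    obtain ⟨k, hk⟩ := List.mem_iff_get.mp hsl
    have hn2 : 2 ≤ l.length := hlen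
    have hrl : (l.rotate 1).length = l.length := List.length_rotate l 1
    have hzl : (l.zip (l.rotate 1)).length = l.length := by
      rw [List.length_zip, hrl, min_self]
    have hklt : (k : ℕ) < l.length := k.isLt
    have hk2 : ((k : ℕ) + 1) % l.length < l.length := Nat.mod_lt _ (by omega)
    refine ⟨l.get ⟨((k : ℕ) + 1) % l.length, hk2⟩, ?_, ?_⟩
    · intro hts
      have : l.get ⟨((k : ℕ) + 1) % l.length, hk2⟩ = l.get k := by rw [hts, hk]
      have heq := (hnd.get_inj_iff.mp this)
      have hval : ((k : ℕ) + 1) % l.length = (k : ℕ) := congrArg Fin.val heq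
      rcases Nat.lt_or_ge ((k : ℕ) + 1) l.length with hlt | hge
      · rw [Nat.mod_eq_of_lt hlt] at hval; omega
      · have hksucc : (k : ℕ) + 1 = l.length := by omega
        have hz : ((k : ℕ) + 1) % l.length = 0 := by rw [hksucc]; exact Nat.mod_self _
        omega
    · have hget : (l.zip (l.rotate 1)).get ⟨(k : ℕ), by omega⟩ =
          (l.get ⟨(k : ℕ), by omega⟩, (l.rotate 1).get ⟨(k : ℕ), by omega⟩) :=
        by simp only [List.get_eq_getElem, List.getElem_zip]
      have hrot : (l.rotate 1).get ⟨(k : ℕ), by omega⟩ =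
          l.get ⟨((k : ℕ) + 1) % l.length, hk2⟩ := by
        rw [List.get_rotate]
      have hks : l.get ⟨(k : ℕ), by omega⟩ = s := by
        have : (⟨(k : ℕ), by omega⟩ : Fin l.length) = k := rfl
        rw [this, hk]
      have : (l.zip (l.rotate 1)).get ⟨(k : ℕ), by omega⟩ =
          (s, l.get ⟨((k : ℕ) + 1) % l.length, hk2⟩) := by
        rw [hget, hrot, hks]
      rw [mem_cycArcs, arcsL, ← this]
      exact List.get_mem _ _
  choose t ht harc using key
  -- the map i ↦ t i is injective into {t // t ≠ s}
  have hinj : Function.Injective (fun i => (⟨t i, ht i⟩ : {x : Fin 4 // x ≠ s})) := by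
    intro i j hij
    by_contra hne
    have := hd i j hne
    have h1 : (s, t i) ∈ cycArcs (f i) := harc i
    have h2 : (s, t i) ∈ cycArcs (f j) := by
      have : t i = t j := congrArg Subtype.val hij
      rw [this]; exact harc j
    exact Set.disjoint_left.mp this h1 h2
  have hcard := Fintype.card_le_of_injective _ hinj
  have : Fintype.card {x : Fin 4 // x ≠ s} = 3 := by
    have := Fintype.card_subtype_compl (fun x : Fin 4 => x = s)
    simp [Fintype.card_subtype_eq] at this
    simpa using this
  simpa [this] using hcard

lemma lambdaS_eq {S : Set (Fin 4)} {c : ℕ} (hmem : ArcDisjointSCycles (completeDigraph 4) S c)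
    (hub : ∀ m, ArcDisjointSCycles (completeDigraph 4) S m → m ≤ c) :
    lambdaS (completeDigraph 4) S = c := by
  apply le_antisymm
  · exact csSup_le ⟨c, hmem⟩ hub
  · exact le_csSup ⟨c, fun m hm => hub m hm⟩ hmem

set_option synthInstance.maxSize 1000 in
lemma chkS_pairs : ∀ u v w x : Fin 4, u ≠ v → u ≠ w → u ≠ x → v ≠ w → v ≠ x → w ≠ x →
    (chkS {u,v} [u,v] && chkS {u,v} [u,w,v,x] && chkS {u,v} [u,x,v,w] &&
     disjB [u,v] [u,w,v,x] && disjB [u,v] [u,x,v,w] && disjB [u,w,v,x] [u,x,v,w]) = true := by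
  decide

lemma lambdaS_pair (S : Finset (Fin 4)) (hS : S.card = 2) :
    lambdaS (completeDigraph 4) (↑S) = 3 := by
  obtain ⟨u, v, huv, rfl⟩ := Finset.card_eq_two.mp hS
  -- find the two remaining vertices
  have hcompl : ({u, v}ᶜ : Finset (Fin 4)).card = 2 := by
    rw [Finset.card_compl, hS]; rfl
  obtain ⟨w, x, hwx, hc⟩ := Finset.card_eq_two.mp hcompl
  have hw : w ∈ ({u, v}ᶜ : Finset (Fin 4)) := by rw [hc]; simp
  have hx : x ∈ ({u, v}ᶜ : Finset (Fin 4)) := by rw [hc]; simp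
  simp only [Finset.mem_compl, Finset.mem_insert, Finset.mem_singleton, not_or] at hw hx
  have key := chkS_pairs u v w x huv (Ne.symm hw.1) (Ne.symm hx.1) (Ne.symm hw.2)
    (Ne.symm hx.2) hwx
  simp only [Bool.and_eq_true] at key
  apply lambdaS_eq
  · exact build3 {u, v} [u,v] [u,w,v,x] [u,x,v,w] key.1.1.1.1.1 key.1.1.1.1.2
      key.1.1.1.2 key.1.1.2 key.1.2 key.2
  · intro m hm
    exact bdd_three (s := u) (by simp) hm

lemma lambdaS_le_two {S : Set (Fin 4)} (h0 : (0 : Fin 4) ∈ S) (h1 : (1 : Fin 4) ∈ S)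
    (h2 : (2 : Fin 4) ∈ S) {m : ℕ} (hm : ArcDisjointSCycles (completeDigraph 4) S m) :
    m ≤ 2 := by
  by_contra hc
  push_neg at hc
  exact noThreeSCycles h0 h1 h2 (arcDisjoint_mono hm hc)

theorem lambdaK_completeDigraph_four :
    lambdaK (completeDigraph 4) 2 = 3 ∧
    lambdaK (completeDigraph 4) 3 = 2 ∧
    lambdaK (completeDigraph 4) 4 = 2 := by
  refine ⟨?_, ?_, ?_⟩
  · -- k = 2
    have hmem : 3 ∈ {m | ∃ S : Finset (Fin 4), S.card = 2 ∧ lambdaS (completeDigraph 4) ↑S = m} :=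
      ⟨{0, 1}, by decide, lambdaS_pair _ (by decide)⟩
    apply le_antisymm
    · exact Nat.sInf_le hmem
    · refine le_csInf ⟨3, hmem⟩ ?_
      rintro m ⟨S, hc, rfl⟩
      exact (lambdaS_pair S hc).ge
  · -- k = 3
    have h012 : lambdaS (completeDigraph 4) (↑({0,1,2} : Finset (Fin 4))) = 2 := by
      apply lambdaS_eq (twoCycles _)
      intro m hm
      exact lambdaS_le_two (by simp) (by simp) (by simp) hm
    have hmem : 2 ∈ {m | ∃ S : Finset (Fin 4), S.card = 3 ∧ lambdaS (completeDigraph 4) ↑S = m} :=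
      ⟨{0, 1, 2}, by decide, h012⟩
    apply le_antisymm
    · exact Nat.sInf_le hmem
    · refine le_csInf ⟨2, hmem⟩ ?_
      rintro m ⟨S, hc, rfl⟩
      have hne : S.Nonempty := Finset.card_pos.mp (by omega)
      obtain ⟨s, hs⟩ := hne
      exact le_csSup ⟨3, fun k hk => bdd_three (s := s) hs hk⟩ (twoCycles S)
  · -- k = 4
    have huniv : lambdaS (completeDigraph 4) (↑(Finset.univ : Finset (Fin 4))) = 2 := by
      apply lambdaS_eq (twoCycles _)
      intro m hm
      exact lambdaS_le_two (by simp) (by simp) (by simp) hm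
    have hmem : 2 ∈ {m | ∃ S : Finset (Fin 4), S.card = 4 ∧ lambdaS (completeDigraph 4) ↑S = m} :=
      ⟨Finset.univ, by decide, huniv⟩
    apply le_antisymm
    · exact Nat.sInf_le hmem
    · refine le_csInf ⟨2, hmem⟩ ?_
      rintro m ⟨S, hc, rfl⟩
      have : S = Finset.univ := Finset.eq_univ_of_card S (by simpa using hc)
      subst this
      have hne : (Finset.univ : Finset (Fin 4)).Nonempty := ⟨0, Finset.mem_univ 0⟩
      obtain ⟨s, hs⟩ := hne
      exact le_csSup ⟨3, fun k hk => bdd_three (s := s) hs hk⟩ (twoCycles _)
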